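/- Let j ≥ 0 be an integer and m3, m4 integers with |m3| ≤ j and |m4| ≤ j. If m3 > m4, then e^{i(m4−m3)π/2} · d^j_{m3,m4}(3π/2) = i^{m3−m4} · 2^{−j} / ((j−m3)!·(m3−m4)!·(j+m4)!) · Σ_{k=0}^{min(j−m3, j+m4)} ((−j+m3)^{(k)}·(−j−m4)^{(k)} / ((1+m3−m4)^{(k)}·k!)) · (−1)^k. If m3 ≤ m4, then e^{i(m4−m3)π/2} · d^j_{m3,m4}(3π/2) = i^{m4−m3} · 2^{−j} / ((j+m3)!·(m4−m3)!·(j−m4)!) · Σ_{k=0}^{min(j+m3, j−m4)} ((−j−m3)^{(k)}·(−j+m4)^{(k)} / ((1−m3+m4)^{(k)}·k!)) · (−1)^k. -/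

import Mathlib

namespace Stmt12

noncomputable section

/-- Pochhammer symbol `(a)^{(k)} = a(a+1)⋯(a+k−1)`. -/
def pochN (a : ℂ) (k : ℕ) : ℂ := ∏ i ∈ Finset.range k, (a + i)

/-- The Wigner little-`d` function `d^j_{m,m'}(θ)`. -/
def littled (j : ℕ) (m m' : ℤ) (θ : ℝ) : ℂ :=
  ∑ p ∈ Finset.Icc (max 0 (m - m')) (min ((j : ℤ) - m') ((j : ℤ) + m)),
    ((-1 : ℂ) ^ (m' - m + p) /
        ((Nat.factorial ((j : ℤ) + m - p).toNat : ℂ) * (Nat.factorial p.toNat : ℂ) *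
          (Nat.factorial (m' - m + p).toNat : ℂ) *
          (Nat.factorial ((j : ℤ) - m' - p).toNat : ℂ))) *
      ((Real.sin (θ / 2) : ℂ)) ^ (m' - m + 2 * p).toNat *
      ((Real.cos (θ / 2) : ℂ)) ^ (2 * (j : ℤ) + m - m' - 2 * p).toNat

lemma pochN_succ (a : ℂ) (k : ℕ) : pochN a (k+1) = pochN a k * (a + k) :=
  Finset.prod_range_succ _ _

lemma pochN_neg_nat (A : ℕ) : ∀ k : ℕ, k ≤ A →
    pochN (-(A:ℂ)) k * ((A-k).factorial : ℂ) = (-1)^k * (A.factorial : ℂ) := by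
  intro k
  induction k with
  | zero => simp [pochN]
  | succ k ih =>
    intro hk
    have hk' : k ≤ A := by omega
    have key := ih hk'
    have h1 : (A - k) = (A - (k+1)) + 1 := by omega
    rw [h1, Nat.factorial_succ] at key
    have harg : (-(A:ℂ) + k) = -((A - (k+1) + 1 : ℕ) : ℂ) := by
      push_cast [Nat.cast_sub hk']; push_cast [Nat.cast_sub hk]; ring
    rw [pochN_succ, harg]
    push_cast at key ⊢
    rw [pow_succ]
    linear_combination (-1 : ℂ) * key

lemma pochN_one_add (M : ℕ) : ∀ k : ℕ,
    pochN (1 + (M:ℂ)) k * (M.factorial : ℂ) = ((M+k).factorial : ℂ) := by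
  intro k
  induction k with
  | zero => simp [pochN]
  | succ k ih =>
    rw [pochN_succ, show M + (k+1) = (M+k) + 1 from rfl, Nat.factorial_succ]
    push_cast
    linear_combination (1 + (M:ℂ) + k) * ih

lemma pochN_one_add_ne_zero (M k : ℕ) : pochN (1 + (M:ℂ)) k ≠ 0 := by
  intro h
  have := pochN_one_add M k
  rw [h, zero_mul] at this
  exact (Nat.cast_ne_zero (R:=ℂ)).mpr (Nat.factorial_ne_zero (M+k)) this.symm

lemma term_eq (A B M k : ℕ) (hA : k ≤ A) (hB : k ≤ B) :
    (-1:ℂ)^k / (((B-k).factorial : ℂ) * ((M+k).factorial : ℂ) * (k.factorial : ℂ) * ((A-k).factorial : ℂ)) =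
    1 / ((A.factorial : ℂ) * (M.factorial : ℂ) * (B.factorial : ℂ)) *
      ((pochN (-(A:ℂ)) k * pochN (-(B:ℂ)) k) / (pochN (1 + (M:ℂ)) k * (k.factorial : ℂ)) * (-1:ℂ)^k) := by
  have h1 := pochN_neg_nat A k hA
  have h2 := pochN_neg_nat B k hB
  have h3 := pochN_one_add M k
  have f0 : ∀ n : ℕ, ((n.factorial : ℂ)) ≠ 0 := fun n => Nat.cast_ne_zero.mpr (Nat.factorial_ne_zero n)
  have e1 : pochN (-(A:ℂ)) k = (-1)^k * (A.factorial : ℂ) / ((A-k).factorial : ℂ) :=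
    (eq_div_iff (f0 _)).mpr h1
  have e2 : pochN (-(B:ℂ)) k = (-1)^k * (B.factorial : ℂ) / ((B-k).factorial : ℂ) :=
    (eq_div_iff (f0 _)).mpr h2
  have e3 : pochN (1 + (M:ℂ)) k = ((M+k).factorial : ℂ) / (M.factorial : ℂ) :=
    (eq_div_iff (f0 _)).mpr h3
  rw [e1, e2, e3]
  have fA := f0 A
  have fB := f0 B
  have fM := f0 M
  have fk := f0 k
  have fAk := f0 (A-k)
  have fBk := f0 (B-k)
  have fMk := f0 (M+k)
  field_simp
  rcases Nat.even_or_odd k with h | h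
  · rw [h.neg_one_pow]; ring
  · rw [h.neg_one_pow]; ring

lemma sin34 : Real.sin (3 * Real.pi / 2 / 2) = Real.sqrt 2 / 2 := by
  rw [show 3 * Real.pi / 2 / 2 = Real.pi - Real.pi / 4 by ring, Real.sin_pi_sub,
    Real.sin_pi_div_four]

lemma cos34 : Real.cos (3 * Real.pi / 2 / 2) = -(Real.sqrt 2 / 2) := by
  rw [show 3 * Real.pi / 2 / 2 = Real.pi - Real.pi / 4 by ring, Real.cos_pi_sub,
    Real.cos_pi_div_four]

lemma trig_pow (jn μ n1 n2 : ℕ) (h : n1 + n2 = 2*jn) (hpar : n1 % 2 = μ % 2) :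
    (((Real.sqrt 2 / 2 : ℝ)) : ℂ)^n2 * (-((Real.sqrt 2 / 2 : ℝ) : ℂ))^n1
      = (-1:ℂ)^μ * (2:ℂ)^(-(jn:ℤ)) := by
  have hs2 : (((Real.sqrt 2 / 2 : ℝ)) : ℂ)^2 = (2:ℂ)⁻¹ := by
    rw [← Complex.ofReal_pow]
    norm_num [div_pow, Real.sq_sqrt]
  have hsign : (-1:ℂ)^n1 = (-1:ℂ)^μ := by
    rcases Nat.even_or_odd n1 with he | ho
    · have h1 := Nat.even_iff.mp he
      rw [he.neg_one_pow, (Nat.even_iff.mpr (by omega : μ % 2 = 0)).neg_one_pow]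
    · have h1 := Nat.odd_iff.mp ho
      rw [ho.neg_one_pow, (Nat.odd_iff.mpr (by omega : μ % 2 = 1)).neg_one_pow]
  rw [neg_pow, show (((Real.sqrt 2 / 2 : ℝ)) : ℂ)^n2 * ((-1:ℂ)^n1 * (((Real.sqrt 2 / 2 : ℝ)) : ℂ)^n1)
      = (-1:ℂ)^n1 * (((Real.sqrt 2 / 2 : ℝ)) : ℂ)^(n1+n2) by rw [pow_add]; ring,
    h, pow_mul, hs2, hsign, inv_pow, ← zpow_natCast (2:ℂ), ← zpow_neg]

lemma hexp (n : ℤ) : Complex.exp (Complex.I * (n : ℂ) * (Real.pi : ℂ) / 2) = Complex.I ^ n := by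
  have h1 : Complex.I * (n : ℂ) * (Real.pi : ℂ) / 2 = (n : ℂ) * (((Real.pi / 2 : ℝ) : ℂ) * Complex.I) := by
    push_cast; ring
  rw [h1, Complex.exp_int_mul, Complex.exp_mul_I, ← Complex.ofReal_cos, ← Complex.ofReal_sin,
    Real.cos_pi_div_two, Real.sin_pi_div_two]
  norm_num


set_option maxHeartbeats 1000000 in
lemma eval1 (j a b μ : ℕ) (m m' : ℤ)
    (hm : m - m' = (μ : ℤ)) (ha : (j : ℤ) - m = (a : ℤ)) (hb : (j : ℤ) + m' = (b : ℤ)) :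
    littled j m m' (3 * Real.pi / 2) =
      (-1:ℂ)^μ * (2:ℂ)^(-(j:ℤ)) *
        ∑ k ∈ Finset.range (min a b + 1),
          (-1:ℂ)^k / (((b-k).factorial : ℂ) * ((μ+k).factorial : ℂ) * (k.factorial : ℂ) *
            ((a-k).factorial : ℂ)) := by
  have h2j : a + b + μ = 2 * j := by omega
  unfold littled
  rw [show max 0 (m - m') = (μ : ℤ) by omega,
    show min ((j:ℤ) - m') ((j:ℤ) + m) = (μ : ℤ) + (min a b : ℕ) by
      push_cast; omega]
  rw [show Finset.Icc (μ:ℤ) ((μ:ℤ) + (min a b : ℕ)) =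
      Finset.map ⟨fun k : ℕ => (μ:ℤ) + k, show Function.Injective _ from fun x y hxy => by simp only [add_right_inj, Nat.cast_inj] at hxy; exact hxy⟩ (Finset.range (min a b + 1)) by
        ext p
        simp only [Finset.mem_Icc, Finset.mem_map, Finset.mem_range, Function.Embedding.coeFn_mk]
        constructor
        · intro hp
          exact ⟨(p - μ).toNat, by omega, by omega⟩
        · rintro ⟨x, hx, rfl⟩
          omega,
    Finset.sum_map, Finset.mul_sum]
  apply Finset.sum_congr rfl
  intro k hk
  simp only [Function.Embedding.coeFn_mk]
  have hkab : k ≤ min a b := by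
    simp only [Finset.mem_range] at hk; omega
  have t1 : ((j:ℤ) + m - ((μ:ℤ) + k)).toNat = b - k := by omega
  have t2 : (((μ:ℤ) + k)).toNat = μ + k := by omega
  have t3 : (m' - m + ((μ:ℤ) + k)).toNat = k := by omega
  have t4 : ((j:ℤ) - m' - ((μ:ℤ) + k)).toNat = a - k := by omega
  have t5 : (m' - m + 2 * ((μ:ℤ) + k)).toNat = μ + 2 * k := by omega
  have t6 : (2*(j:ℤ) + m - m' - 2 * ((μ:ℤ) + k)).toNat = a + b - 2 * k := by omega
  have t7 : m' - m + ((μ:ℤ) + k) = (k : ℤ) := by omega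
  rw [t1, t2, t3, t4, t5, t6, t7, zpow_natCast, sin34, cos34]
  rw [Complex.ofReal_neg]
  have := trig_pow j μ (a + b - 2*k) (μ + 2*k) (by omega) (by omega)
  rw [mul_assoc, this]
  ring

set_option maxHeartbeats 1000000 in
lemma eval2 (j a b ν : ℕ) (m m' : ℤ)
    (hm : m' - m = (ν : ℤ)) (ha : (j : ℤ) + m = (a : ℤ)) (hb : (j : ℤ) - m' = (b : ℤ)) :
    littled j m m' (3 * Real.pi / 2) =
      (2:ℂ)^(-(j:ℤ)) *
        ∑ k ∈ Finset.range (min a b + 1),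
          (-1:ℂ)^k / (((b-k).factorial : ℂ) * ((ν+k).factorial : ℂ) * (k.factorial : ℂ) *
            ((a-k).factorial : ℂ)) := by
  have h2j : a + b + ν = 2 * j := by omega
  unfold littled
  rw [show max 0 (m - m') = (0 : ℤ) by omega,
    show min ((j:ℤ) - m') ((j:ℤ) + m) = ((min a b : ℕ) : ℤ) by push_cast; omega]
  rw [show Finset.Icc (0:ℤ) ((min a b : ℕ) : ℤ) =
      Finset.map ⟨fun k : ℕ => (k:ℤ), show Function.Injective _ from fun x y hxy => by simp only [Nat.cast_inj] at hxy; exact hxy⟩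
        (Finset.range (min a b + 1)) by
        ext p
        simp only [Finset.mem_Icc, Finset.mem_map, Finset.mem_range, Function.Embedding.coeFn_mk]
        constructor
        · intro hp
          exact ⟨p.toNat, by omega, by omega⟩
        · rintro ⟨x, hx, rfl⟩
          omega,
    Finset.sum_map, Finset.mul_sum]
  apply Finset.sum_congr rfl
  intro k hk
  simp only [Function.Embedding.coeFn_mk]
  have hkab : k ≤ min a b := by
    simp only [Finset.mem_range] at hk; omega
  have t1 : ((j:ℤ) + m - k).toNat = a - k := by omega
  have t2 : ((k:ℤ)).toNat = k := by omega
  have t3 : (m' - m + k).toNat = ν + k := by omega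
  have t4 : ((j:ℤ) - m' - k).toNat = b - k := by omega
  have t5 : (m' - m + 2 * (k:ℤ)).toNat = ν + 2 * k := by omega
  have t6 : (2*(j:ℤ) + m - m' - 2 * (k:ℤ)).toNat = a + b - 2 * k := by omega
  have t7 : m' - m + (k:ℤ) = ((ν + k : ℕ) : ℤ) := by omega
  rw [t1, t2, t3, t4, t5, t6, t7, zpow_natCast, sin34, cos34]
  rw [Complex.ofReal_neg]
  have := trig_pow j ν (a + b - 2*k) (ν + 2*k) (by omega) (by omega)
  rw [mul_assoc, this, pow_add]
  rcases Nat.even_or_odd ν with h | h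
  · rw [h.neg_one_pow]; ring
  · rw [h.neg_one_pow]; ring

lemma hI (μ : ℕ) : Complex.I ^ (-(μ:ℤ)) * (-1:ℂ)^μ = Complex.I ^ ((μ:ℕ):ℤ) := by
  rw [show ((-1:ℂ))^μ = Complex.I ^ (2*μ) by rw [pow_mul, Complex.I_sq],
    ← zpow_natCast Complex.I (2*μ), ← zpow_add₀ Complex.I_ne_zero]
  congr 1
  push_cast
  ring


/-- The change-of-basis matrix entries `e^{i(m4−m3)π/2}·d^j_{m3,m4}(3π/2)` as terminating
`₂F₁(…;−1)` sums. -/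
theorem stmt_12 (j : ℕ) (m3 m4 : ℤ) (h3 : |m3| ≤ (j : ℤ)) (h4 : |m4| ≤ (j : ℤ)) :
    (m4 < m3 →
      Complex.exp (Complex.I * ((m4 : ℂ) - m3) * Real.pi / 2) *
          littled j m3 m4 (3 * Real.pi / 2) =
        Complex.I ^ (m3 - m4) * (2 : ℂ) ^ (-(j : ℤ)) /
            ((Nat.factorial ((j : ℤ) - m3).toNat : ℂ) *
              (Nat.factorial (m3 - m4).toNat : ℂ) *
              (Nat.factorial ((j : ℤ) + m4).toNat : ℂ)) *
          ∑ k ∈ Finset.range (min ((j : ℤ) - m3).toNat ((j : ℤ) + m4).toNat + 1),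
            (pochN (-(j : ℂ) + m3) k * pochN (-(j : ℂ) - m4) k) /
                (pochN (1 + (m3 : ℂ) - m4) k * (Nat.factorial k : ℂ)) * (-1 : ℂ) ^ k) ∧
      (m3 ≤ m4 →
        Complex.exp (Complex.I * ((m4 : ℂ) - m3) * Real.pi / 2) *
            littled j m3 m4 (3 * Real.pi / 2) =
          Complex.I ^ (m4 - m3) * (2 : ℂ) ^ (-(j : ℤ)) /
              ((Nat.factorial ((j : ℤ) + m3).toNat : ℂ) *
                (Nat.factorial (m4 - m3).toNat : ℂ) *
                (Nat.factorial ((j : ℤ) - m4).toNat : ℂ)) *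
            ∑ k ∈ Finset.range (min ((j : ℤ) + m3).toNat ((j : ℤ) - m4).toNat + 1),
              (pochN (-(j : ℂ) - m3) k * pochN (-(j : ℂ) + m4) k) /
                  (pochN (1 - (m3 : ℂ) + m4) k * (Nat.factorial k : ℂ)) * (-1 : ℂ) ^ k) := by
  have h3' := abs_le.mp h3
  have h4' := abs_le.mp h4
  have hE : Complex.exp (Complex.I * ((m4:ℂ) - m3) * Real.pi / 2) = Complex.I ^ (m4 - m3) := by
    rw [show Complex.I * ((m4:ℂ) - m3) * (Real.pi:ℂ) / 2
        = Complex.I * ((m4 - m3 : ℤ):ℂ) * (Real.pi:ℂ) / 2 by push_cast; ring]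
    exact hexp _
  constructor
  · intro hlt
    obtain ⟨a, ha⟩ : ∃ a : ℕ, (j:ℤ) - m3 = (a:ℤ) := ⟨((j:ℤ) - m3).toNat, by omega⟩
    obtain ⟨b, hb⟩ : ∃ b : ℕ, (j:ℤ) + m4 = (b:ℤ) := ⟨((j:ℤ) + m4).toNat, by omega⟩
    obtain ⟨μ, hmu⟩ : ∃ μ : ℕ, m3 - m4 = (μ:ℤ) := ⟨(m3 - m4).toNat, by omega⟩
    have c1 : (-(j:ℂ) + m3) = -(a:ℂ) := by
      have := congrArg (Int.cast : ℤ → ℂ) ha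
      push_cast at this
      linear_combination (-1:ℂ) * this
    have c2 : (-(j:ℂ) - m4) = -(b:ℂ) := by
      have := congrArg (Int.cast : ℤ → ℂ) hb
      push_cast at this
      linear_combination (-1:ℂ) * this
    have c3 : (1 + (m3:ℂ) - m4) = 1 + (μ:ℂ) := by
      have := congrArg (Int.cast : ℤ → ℂ) hmu
      push_cast at this
      linear_combination this
    rw [hE, eval1 j a b μ m3 m4 hmu ha hb,
      show ((j:ℤ) - m3).toNat = a by omega, show (m3 - m4).toNat = μ by omega,
      show ((j:ℤ) + m4).toNat = b by omega,
      show (m4 - m3 : ℤ) = -(μ:ℤ) by omega, show (m3 - m4 : ℤ) = ((μ:ℕ):ℤ) by omega]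
    simp only [c1, c2, c3]
    have hsum : (∑ k ∈ Finset.range (min a b + 1),
        (-1:ℂ)^k / (((b-k).factorial : ℂ) * ((μ+k).factorial : ℂ) * (k.factorial : ℂ) *
          ((a-k).factorial : ℂ)))
        = 1 / ((a.factorial : ℂ) * (μ.factorial : ℂ) * (b.factorial : ℂ)) *
          ∑ k ∈ Finset.range (min a b + 1),
            (pochN (-(a:ℂ)) k * pochN (-(b:ℂ)) k) / (pochN (1 + (μ:ℂ)) k * (k.factorial : ℂ))
              * (-1:ℂ)^k := by
      rw [Finset.mul_sum]
      refine Finset.sum_congr rfl fun k hk => ?_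
      simp only [Finset.mem_range] at hk
      exact term_eq a b μ k (by omega) (by omega)
    rw [hsum, ← hI μ]
    ring
  · intro hle
    obtain ⟨a, ha⟩ : ∃ a : ℕ, (j:ℤ) + m3 = (a:ℤ) := ⟨((j:ℤ) + m3).toNat, by omega⟩
    obtain ⟨b, hb⟩ : ∃ b : ℕ, (j:ℤ) - m4 = (b:ℤ) := ⟨((j:ℤ) - m4).toNat, by omega⟩
    obtain ⟨ν, hnu⟩ : ∃ ν : ℕ, m4 - m3 = (ν:ℤ) := ⟨(m4 - m3).toNat, by omega⟩
    have c1 : (-(j:ℂ) - m3) = -(a:ℂ) := by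
      have := congrArg (Int.cast : ℤ → ℂ) ha
      push_cast at this
      linear_combination (-1:ℂ) * this
    have c2 : (-(j:ℂ) + m4) = -(b:ℂ) := by
      have := congrArg (Int.cast : ℤ → ℂ) hb
      push_cast at this
      linear_combination (-1:ℂ) * this
    have c3 : (1 - (m3:ℂ) + m4) = 1 + (ν:ℂ) := by
      have := congrArg (Int.cast : ℤ → ℂ) hnu
      push_cast at this
      linear_combination this
    rw [hE, eval2 j a b ν m3 m4 hnu ha hb,
      show ((j:ℤ) + m3).toNat = a by omega, show (m4 - m3).toNat = ν by omega,
      show ((j:ℤ) - m4).toNat = b by omega]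
    simp only [c1, c2, c3]
    have hsum : (∑ k ∈ Finset.range (min a b + 1),
        (-1:ℂ)^k / (((b-k).factorial : ℂ) * ((ν+k).factorial : ℂ) * (k.factorial : ℂ) *
          ((a-k).factorial : ℂ)))
        = 1 / ((a.factorial : ℂ) * (ν.factorial : ℂ) * (b.factorial : ℂ)) *
          ∑ k ∈ Finset.range (min a b + 1),
            (pochN (-(a:ℂ)) k * pochN (-(b:ℂ)) k) / (pochN (1 + (ν:ℂ)) k * (k.factorial : ℂ))
              * (-1:ℂ)^k := by
      rw [Finset.mul_sum]
      refine Finset.sum_congr rfl fun k hk => ?_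
      simp only [Finset.mem_range] at hk
      exact term_eq a b ν k (by omega) (by omega)
    rw [hsum]
    ring

end

end Stmt12
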